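/- Let U ⊆ ℝ³ be open, let α > 0, and let θ : U → ℝ³ be twice continuously differentiable such that ζ(x) = x + θ(x) has everywhere invertible Jacobian Dζ with 𝒥 = det Dζ > 0; set 𝒜 = [Dζ]^{-1}. Let 𝒟 be any one of the first-order operators ∂_i (i = 1,2,3), Λ, or ∂̸_{jk} (j,k ∈ {1,2,3}). Then for each k, i ∈ {1,2,3}, on U: 𝒟( 𝒥^{-1/α} 𝒜^k_i ) = − 𝒥^{-1/α} 𝒜^k_j [∇_ζ(𝒟θ)]^i_j − (1/α) 𝒥^{-1/α} 𝒜^k_i div_ζ(𝒟θ) − 𝒥^{-1/α} 𝒜^k_j [Curl_ζ(𝒟θ)]^j_i − ( 𝒥^{-1/α} 𝒜^k_j 𝒜^s_i [𝒟, ∂_s] θ^j + (1/α) 𝒥^{-1/α} 𝒜^k_i 𝒜^s_j [𝒟, ∂_s] θ^j ), where [𝒟, ∂_s] θ^j = 𝒟(∂_s θ^j) − ∂_s(𝒟 θ^j) and repeated indices j, s are summed from 1 to 3. -/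

import Mathlib

/-- Partial derivative `∂_j f` of a scalar function on `ℝ³` (as an operator). -/
noncomputable def pdF (j : Fin 3) (f : (Fin 3 → ℝ) → ℝ) : (Fin 3 → ℝ) → ℝ :=
  fun x => fderiv ℝ f x (Pi.single j 1)

/-- Angular derivative `∂̸_ij = x_i ∂_j − x_j ∂_i`. -/
noncomputable def angF (i j : Fin 3) (f : (Fin 3 → ℝ) → ℝ) : (Fin 3 → ℝ) → ℝ :=
  fun x => x i * pdF j f x - x j * pdF i f x

/-- Radial derivative `Λ = x₁∂₁ + x₂∂₂ + x₃∂₃`. -/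
noncomputable def radF (f : (Fin 3 → ℝ) → ℝ) : (Fin 3 → ℝ) → ℝ :=
  fun x => ∑ l : Fin 3, x l * pdF l f x

/-- Jacobian matrix `Dζ`, entries `[Dζ]^i_j = ∂_j ζ^i`. -/
noncomputable def jacM (ζ : (Fin 3 → ℝ) → (Fin 3 → ℝ)) (x : Fin 3 → ℝ) :
    Matrix (Fin 3) (Fin 3) ℝ :=
  Matrix.of fun i j => pdF j (fun y => ζ y i) x

namespace LinPjac

noncomputable section

def adj3 (e : Fin 3 → Fin 3 → ℝ) (k i : Fin 3) : ℝ :=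
  e (i+1) (k+1) * e (i+2) (k+2) - e (i+1) (k+2) * e (i+2) (k+1)

def adjD (e G : Fin 3 → Fin 3 → ℝ) (k i : Fin 3) : ℝ :=
  G (i+1) (k+1) * e (i+2) (k+2) + e (i+1) (k+1) * G (i+2) (k+2)
    - (G (i+1) (k+2) * e (i+2) (k+1) + e (i+1) (k+2) * G (i+2) (k+1))

def det3 (e : Fin 3 → Fin 3 → ℝ) : ℝ :=
  e 0 0 * e 1 1 * e 2 2 - e 0 0 * e 1 2 * e 2 1 - e 0 1 * e 1 0 * e 2 2
    + e 0 1 * e 1 2 * e 2 0 + e 0 2 * e 1 0 * e 2 1 - e 0 2 * e 1 1 * e 2 0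

def detD (e G : Fin 3 → Fin 3 → ℝ) : ℝ := ∑ s, ∑ j, adj3 e s j * G j s

lemma fin3mk0 (h : (0:ℕ) < 3) : (⟨0,h⟩ : Fin 3) = 0 := rfl
lemma fin3mk1 (h : (1:ℕ) < 3) : (⟨1,h⟩ : Fin 3) = 1 := rfl
lemma fin3mk2 (h : (2:ℕ) < 3) : (⟨2,h⟩ : Fin 3) = 2 := rfl

set_option maxHeartbeats 2000000 in
lemma cram (e G : Fin 3 → Fin 3 → ℝ) (k i : Fin 3) :
    det3 e * adjD e G k i
      = detD e G * adj3 e k i - ∑ j, ∑ s, adj3 e k j * G j s * adj3 e s i := by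
  fin_cases k <;> fin_cases i <;>
    simp only [fin3mk0, fin3mk1, fin3mk2, det3, detD, adjD, adj3, Fin.sum_univ_three,
      Fin.reduceAdd] <;> ring

set_option maxHeartbeats 2000000 in
lemma scalar_key (α t : ℝ) (hα : α ≠ 0) (e G H : Fin 3 → Fin 3 → ℝ)
    (hd : det3 e ≠ 0) (k i : Fin 3) :
    (-(1/α)) * (t / det3 e) * detD e G * ((det3 e)⁻¹ * adj3 e k i)
      + t * (-((det3 e)^2)⁻¹ * detD e G * adj3 e k i + (det3 e)⁻¹ * adjD e G k i)
    = -(t * ∑ j, ((det3 e)⁻¹ * adj3 e k j) * (∑ s, ((det3 e)⁻¹ * adj3 e s j) * H i s))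
      - (1/α) * t * ((det3 e)⁻¹ * adj3 e k i) *
          (∑ r, ∑ s, ((det3 e)⁻¹ * adj3 e s r) * H r s)
      - (t * ∑ j, ((det3 e)⁻¹ * adj3 e k j) *
          (∑ s, (((det3 e)⁻¹ * adj3 e s i) * H j s - ((det3 e)⁻¹ * adj3 e s j) * H i s)))
      - ((t * ∑ j, ∑ s, ((det3 e)⁻¹ * adj3 e k j) * ((det3 e)⁻¹ * adj3 e s i) * (G j s - H j s))
        + (1/α) * t * ((det3 e)⁻¹ * adj3 e k i) *
            ∑ j, ∑ s, ((det3 e)⁻¹ * adj3 e s j) * (G j s - H j s)) := by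
  have hC := cram e G k i
  have h2 : adjD e G k i
      = (detD e G * adj3 e k i - ∑ j, ∑ s, adj3 e k j * G j s * adj3 e s i) / det3 e := by
    rw [eq_div_iff hd]; linarith [hC]
  rw [h2]
  simp only [detD, Fin.sum_univ_three]
  field_simp
  ring

lemma sum_single_eq (x : Fin 3 → ℝ) :
    ∑ l, x l • (Pi.single l 1 : Fin 3 → ℝ) = x := by
  funext m
  simp [Finset.sum_apply, Pi.single_apply, mul_comm]

lemma rep_exists (D : ((Fin 3 → ℝ) → ℝ) → ((Fin 3 → ℝ) → ℝ))
    (hD : (∃ i : Fin 3, D = pdF i) ∨ D = radF ∨ ∃ j k : Fin 3, D = angF j k) :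
    ∃ v : (Fin 3 → ℝ) → (Fin 3 → ℝ), ∀ f x, D f x = fderiv ℝ f x (v x) := by
  rcases hD with ⟨i, rfl⟩ | rfl | ⟨j, k, rfl⟩
  · exact ⟨fun _ => Pi.single i 1, fun f x => rfl⟩
  · refine ⟨fun x => x, fun f x => ?_⟩
    calc radF f x = ∑ l, fderiv ℝ f x (x l • (Pi.single l 1 : Fin 3 → ℝ)) := by
          simp [radF, pdF]
      _ = fderiv ℝ f x (∑ l, x l • (Pi.single l 1 : Fin 3 → ℝ)) := by rw [map_sum]
      _ = fderiv ℝ f x x := by rw [sum_single_eq]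
  · refine ⟨fun x => x j • (Pi.single k 1 : Fin 3 → ℝ) - x k • (Pi.single j 1 : Fin 3 → ℝ),
      fun f x => ?_⟩
    simp [angF, pdF]

variable {U : Set (Fin 3 → ℝ)} {θ : (Fin 3 → ℝ) → (Fin 3 → ℝ)} {x : Fin 3 → ℝ}

lemma jac_entry_eq (θ : (Fin 3 → ℝ) → (Fin 3 → ℝ)) (y : Fin 3 → ℝ) (j s : Fin 3) :
    jacM (fun z => z + θ z) y j s
      = fderiv ℝ (fun z => z j + θ z j) y (Pi.single s 1) := rfl

lemma comp_contDiffAt (hU : IsOpen U) (hθ : ContDiffOn ℝ 2 θ U) (hx : x ∈ U) (j : Fin 3) :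
    ContDiffAt ℝ 2 (fun z => z j + θ z j) x := by
  have h1 : ContDiffAt ℝ 2 (fun z : Fin 3 → ℝ => z j) x :=
    (ContinuousLinearMap.proj (R := ℝ) (φ := fun _ : Fin 3 => ℝ) j).contDiff.contDiffAt
  have h2 : ContDiffAt ℝ 2 (fun z => θ z j) x :=
    ((ContinuousLinearMap.proj (R := ℝ) (φ := fun _ : Fin 3 => ℝ) j).contDiff.comp_contDiffAt x
      (hθ.contDiffAt (hU.mem_nhds hx)))
  exact h1.add h2

lemma entry_contDiffAt (hU : IsOpen U) (hθ : ContDiffOn ℝ 2 θ U) (hx : x ∈ U) (j s : Fin 3) :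
    ContDiffAt ℝ 1 (fun y => jacM (fun z => z + θ z) y j s) x := by
  have h := ((comp_contDiffAt hU hθ hx j).fderiv_right (m := 1) (by norm_num)).clm_apply
    (contDiffAt_const (c := (Pi.single s 1 : Fin 3 → ℝ)))
  exact h

lemma entry_fderiv_eq (hU : IsOpen U) (hθ : ContDiffOn ℝ 2 θ U) (hx : x ∈ U) (j s : Fin 3) :
    fderiv ℝ (fun y => jacM (fun z => z + θ z) y j s) x
      = fderiv ℝ (pdF s (fun z => θ z j)) x := by
  have hev : (fun y => jacM (fun z => z + θ z) y j s)
      =ᶠ[nhds x] fun y => (Pi.single s 1 : Fin 3 → ℝ) j + pdF s (fun z => θ z j) y := by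
    filter_upwards [hU.mem_nhds hx] with y hy
    have hdθ : DifferentiableAt ℝ (fun z => θ z j) y :=
      (((ContinuousLinearMap.proj (R := ℝ) (φ := fun _ : Fin 3 => ℝ) j).contDiff.comp_contDiffAt y
        (hθ.contDiffAt (hU.mem_nhds hy)))).differentiableAt (by norm_num)
    have hdp : DifferentiableAt ℝ (fun z : Fin 3 → ℝ => z j) y :=
      (ContinuousLinearMap.proj (R := ℝ) (φ := fun _ : Fin 3 => ℝ) j).differentiableAt
    rw [jac_entry_eq, fderiv_fun_add hdp hdθ]
    simp only [ContinuousLinearMap.add_apply, pdF]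
    congr 1
    have : (fun z : Fin 3 → ℝ => z j)
        = ⇑(ContinuousLinearMap.proj (R := ℝ) (φ := fun _ : Fin 3 => ℝ) j) := rfl
    rw [this, (ContinuousLinearMap.proj (R := ℝ) (φ := fun _ : Fin 3 => ℝ) j).fderiv]
    rfl
  rw [hev.fderiv_eq, fderiv_const_add]

lemma det3_eq (A : Matrix (Fin 3) (Fin 3) ℝ) : A.det = det3 (fun a b => A a b) := by
  rw [Matrix.det_fin_three]; rfl

lemma adj3_eq (A : Matrix (Fin 3) (Fin 3) ℝ) (k i : Fin 3) :
    A.adjugate k i = adj3 (fun a b => A a b) k i := by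
  rw [Matrix.adjugate_fin_three]
  fin_cases k <;> fin_cases i <;>
    simp [fin3mk0, fin3mk1, fin3mk2, adj3, Fin.reduceAdd, Matrix.of_apply] <;> ring

lemma inv_entry (A : Matrix (Fin 3) (Fin 3) ℝ) (k i : Fin 3) :
    A⁻¹ k i = (det3 (fun a b => A a b))⁻¹ * adj3 (fun a b => A a b) k i := by
  rw [Matrix.inv_def, Matrix.smul_apply, Ring.inverse_eq_inv, det3_eq, adj3_eq, smul_eq_mul]

end

end LinPjac

open LinPjac

set_option maxHeartbeats 4000000

/-- **Linearisation of `𝒥^{-1/α} 𝒜`.**  For `ζ = id + θ` with invertible Jacobian and any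
first-order operator `𝒟 ∈ {∂_i, Λ, ∂̸_jk}`,
`𝒟(𝒥^{-1/α}𝒜^k_i) = −𝒥^{-1/α}𝒜^k_j [∇_ζ(𝒟θ)]^i_j − (1/α)𝒥^{-1/α}𝒜^k_i div_ζ(𝒟θ)
 − 𝒥^{-1/α}𝒜^k_j [Curl_ζ(𝒟θ)]^j_i − (𝒥^{-1/α}𝒜^k_j 𝒜^s_i [𝒟,∂_s]θ^j
 + (1/α)𝒥^{-1/α}𝒜^k_i 𝒜^s_j [𝒟,∂_s]θ^j)`. -/
theorem linearisation_of_pjac_ninv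
    (U : Set (Fin 3 → ℝ)) (hU : IsOpen U) (α : ℝ) (hα : 0 < α)
    (θ : (Fin 3 → ℝ) → (Fin 3 → ℝ)) (hθ : ContDiffOn ℝ 2 θ U)
    (hinv : ∀ x ∈ U, IsUnit (jacM (fun y => y + θ y) x))
    (hJpos : ∀ x ∈ U, 0 < (jacM (fun y => y + θ y) x).det)
    (D : ((Fin 3 → ℝ) → ℝ) → ((Fin 3 → ℝ) → ℝ))
    (hD : (∃ i : Fin 3, D = pdF i) ∨ D = radF ∨ ∃ j k : Fin 3, D = angF j k) :
    ∀ x ∈ U, ∀ k i : Fin 3,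
      D (fun y => ((jacM (fun z => z + θ z) y).det) ^ (-1 / α)
            * ((jacM (fun z => z + θ z) y)⁻¹ k i)) x
        = -(((jacM (fun z => z + θ z) x).det) ^ (-1 / α) *
              ∑ j : Fin 3, ((jacM (fun z => z + θ z) x)⁻¹ k j) *
                (∑ s : Fin 3, ((jacM (fun z => z + θ z) x)⁻¹ s j) *
                  pdF s (D (fun z => θ z i)) x))
          - (1 / α) * ((jacM (fun z => z + θ z) x).det) ^ (-1 / α) *
              ((jacM (fun z => z + θ z) x)⁻¹ k i) *
              (∑ r : Fin 3, ∑ s : Fin 3, ((jacM (fun z => z + θ z) x)⁻¹ s r) *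
                pdF s (D (fun z => θ z r)) x)
          - (((jacM (fun z => z + θ z) x).det) ^ (-1 / α) *
              ∑ j : Fin 3, ((jacM (fun z => z + θ z) x)⁻¹ k j) *
                (∑ s : Fin 3,
                  (((jacM (fun z => z + θ z) x)⁻¹ s i) * pdF s (D (fun z => θ z j)) x
                    - ((jacM (fun z => z + θ z) x)⁻¹ s j) * pdF s (D (fun z => θ z i)) x)))
          - ((((jacM (fun z => z + θ z) x).det) ^ (-1 / α) *
                ∑ j : Fin 3, ∑ s : Fin 3,
                  ((jacM (fun z => z + θ z) x)⁻¹ k j) *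
                    ((jacM (fun z => z + θ z) x)⁻¹ s i) *
                    (D (pdF s (fun z => θ z j)) x - pdF s (D (fun z => θ z j)) x)
              + (1 / α) * (((jacM (fun z => z + θ z) x).det) ^ (-1 / α)) *
                  ((jacM (fun z => z + θ z) x)⁻¹ k i) *
                  ∑ j : Fin 3, ∑ s : Fin 3,
                    ((jacM (fun z => z + θ z) x)⁻¹ s j) *
                      (D (pdF s (fun z => θ z j)) x - pdF s (D (fun z => θ z j)) x))) := by
  obtain ⟨v, hv⟩ := rep_exists D hD
  intro x hx k i
  have hα' : α ≠ 0 := ne_of_gt hα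
  have hdpos : 0 < (jacM (fun z => z + θ z) x).det := hJpos x hx
  have hd3pos : 0 < det3 (fun a b => jacM (fun z => z + θ z) x a b) := by
    rw [← det3_eq]; exact hdpos
  have hd3 : det3 (fun a b => jacM (fun z => z + θ z) x a b) ≠ 0 := ne_of_gt hd3pos
  have hg : ∀ j s : Fin 3, HasFDerivAt (fun y => jacM (fun z => z + θ z) y j s)
      (fderiv ℝ (fun y => jacM (fun z => z + θ z) y j s) x) x :=
    fun j s => ((entry_contDiffAt hU hθ hx j s).differentiableAt one_ne_zero).hasFDerivAt
  have hdet : HasFDerivAt (fun y => det3 (fun a b => jacM (fun z => z + θ z) y a b)) _ x :=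
    (((((((hg 0 0).mul (hg 1 1)).mul (hg 2 2)).sub
        (((hg 0 0).mul (hg 1 2)).mul (hg 2 1))).sub
        (((hg 0 1).mul (hg 1 0)).mul (hg 2 2))).add
        (((hg 0 1).mul (hg 1 2)).mul (hg 2 0))).add
        (((hg 0 2).mul (hg 1 0)).mul (hg 2 1))).sub
        (((hg 0 2).mul (hg 1 1)).mul (hg 2 0))
  have hrpow := hdet.rpow_const (p := -1 / α) (Or.inl hd3)
  have hinvd := (hasDerivAt_inv hd3).comp_hasFDerivAt x hdet
  have hadj : HasFDerivAt (fun y => adj3 (fun a b => jacM (fun z => z + θ z) y a b) k i) _ x :=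
    ((hg (i+1) (k+1)).mul (hg (i+2) (k+2))).sub ((hg (i+1) (k+2)).mul (hg (i+2) (k+1)))
  have hF := hrpow.mul (hinvd.mul hadj)
  have hfun : (fun y => (jacM (fun z => z + θ z) y).det ^ (-1 / α)
        * ((jacM (fun z => z + θ z) y)⁻¹ k i))
      = fun y => det3 (fun a b => jacM (fun z => z + θ z) y a b) ^ (-1 / α) *
          ((det3 (fun a b => jacM (fun z => z + θ z) y a b))⁻¹ *
            adj3 (fun a b => jacM (fun z => z + θ z) y a b) k i) := by
    funext y; rw [det3_eq, inv_entry]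
  rw [hfun, hv]
  have hfd : fderiv ℝ (fun y => det3 (fun a b => jacM (fun z => z + θ z) y a b) ^ (-1 / α) *
      ((det3 (fun a b => jacM (fun z => z + θ z) y a b))⁻¹ *
        adj3 (fun a b => jacM (fun z => z + θ z) y a b) k i)) x = _ := hF.fderiv
  rw [hfd]
  have hkey := scalar_key α (det3 (fun a b => jacM (fun z => z + θ z) x a b) ^ (-1 / α)) hα'
      (fun a b => jacM (fun z => z + θ z) x a b)
      (fun j s => fderiv ℝ (pdF s (fun z => θ z j)) x (v x))
      (fun i s => pdF s (D (fun z => θ z i)) x) hd3 k i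
  simp only [hv, det3_eq, inv_entry] at hkey ⊢
  simp only [ContinuousLinearMap.add_apply, ContinuousLinearMap.sub_apply,
    ContinuousLinearMap.smul_apply, smul_eq_mul, Function.comp_apply, Function.comp, Pi.mul_apply]
  simp only [entry_fderiv_eq hU hθ hx] at hkey ⊢
  rw [Real.rpow_sub hd3pos, Real.rpow_one]
  simp only [detD, adjD, adj3, Fin.sum_univ_three, Fin.reduceAdd] at hkey ⊢
  linear_combination hkey
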